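/- arXiv:1212.5003 — 2 statements merged into one kernel-verified Lean document; each statement's English description precedes it below -/
import Mathlib

section
/- Let α be an alphabet and let a support over the simple regular expressions be given, consisting of: a type 𝔼; a map h : 𝔼 → RegularExpression α; a binary operation ∨𝔼 on 𝔼; an operation ·𝔼 : 𝔼 → RegularExpression α → 𝔼; and elements 1𝔼, 0𝔼 of 𝔼, satisfying L(h(𝒜 ∨𝔼 ℬ)) = L(h(𝒜)) ∪ L(h(ℬ)), L(h(𝒜 ·𝔼 F)) = L(h(𝒜)) · L(F), L(h(1𝔼)) = {ε} and L(h(0𝔼)) = ∅. Let D be the derivation via this support. Then for every nonempty word w over α and every regular expression E over α, the language of h(D(w,E)) equals the left quotient of L(E) by w: L(h(D(w,E))) = w⁻¹(L(E)). -/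
open scoped Classical

/-- A support over the simple regular expressions: a structure set `ε`, a map `h` back to
regular expressions, a sum-like operation `vee`, a product `dot` with an expression, and
constants `one`, `zero`, subject to the language conditions of Definition 1 of the paper. -/
structure Support (α : Type*) (ε : Type*) where
  h : ε → RegularExpression α
  vee : ε → ε → ε
  dot : ε → RegularExpression α → ε
  one : ε
  zero : ε
  h_vee : ∀ A B : ε, (h (vee A B)).matches' = (h A).matches' + (h B).matches'
  h_dot : ∀ (A : ε) (F : RegularExpression α), (h (dot A F)).matches' = (h A).matches' * F.matches'
  h_one : (h one).matches' = 1
  h_zero : (h zero).matches' = 0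

/-- Derivation of a regular expression with respect to a single symbol, via a support. -/
noncomputable def derivS {α ε : Type*} (S : Support α ε) (a : α) : RegularExpression α → ε
  | .zero => S.zero
  | .epsilon => S.zero
  | .char b => if b = a then S.one else S.zero
  | .plus E₁ E₂ => S.vee (derivS S a E₁) (derivS S a E₂)
  | .comp E₁ E₂ =>
      if [] ∈ E₁.matches' then S.vee (S.dot (derivS S a E₁) E₂) (derivS S a E₂)
      else S.dot (derivS S a E₁) E₂
  | .star E₁ => S.dot (derivS S a E₁) E₁.star

/-- Derivation via a support with respect to a nonempty word `a :: w`. -/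
noncomputable def derivWordS {α ε : Type*} (S : Support α ε) :
    α → List α → RegularExpression α → ε
  | a, [], E => derivS S a E
  | a, b :: u, E => derivWordS S b u (S.h (derivS S a E))

/-- Left quotient of a language by a word. -/
def lquot {α : Type*} (w : List α) (L : Language α) : Language α := {v | w ++ v ∈ L}


lemma deriv_matches' {α : Type*} (E : RegularExpression α) (a : α) :
    (E.deriv a).matches' = lquot [a] E.matches' := by
  ext x
  show x ∈ (E.deriv a).matches' ↔ a :: x ∈ E.matches'
  rw [← RegularExpression.rmatch_iff_matches', ← RegularExpression.rmatch_iff_matches']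
  rfl

lemma derivS_matches' {α ε : Type*} (S : Support α ε) (a : α) (E : RegularExpression α) :
    (S.h (derivS S a E)).matches' = (E.deriv a).matches' := by
  induction E with
  | zero => simp [derivS, S.h_zero, RegularExpression.deriv]
  | epsilon => simp [derivS, S.h_zero, RegularExpression.deriv]
  | char b =>
      by_cases hb : b = a
      · subst hb; simp [derivS, S.h_one, RegularExpression.deriv]
      · simp [derivS, hb, S.h_zero, RegularExpression.deriv, Ne.symm hb]
  | plus E₁ E₂ ih₁ ih₂ =>
      simp [derivS, S.h_vee, RegularExpression.deriv, ih₁, ih₂,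
        RegularExpression.matches'_add]
  | comp E₁ E₂ ih₁ ih₂ =>
      have heps : E₁.matchEpsilon = true ↔ [] ∈ E₁.matches' :=
        RegularExpression.rmatch_iff_matches' E₁ []
      by_cases h1 : [] ∈ E₁.matches'
      · rw [show (E₁.comp E₂).deriv a = E₁.deriv a * E₂ + E₂.deriv a by
          simp [RegularExpression.deriv, heps.mpr h1]]
        simp [derivS, h1, S.h_vee, S.h_dot, ih₁, ih₂, RegularExpression.matches'_add,
          RegularExpression.matches'_mul]
      · rw [show (E₁.comp E₂).deriv a = E₁.deriv a * E₂ by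
          simp [RegularExpression.deriv, heps, h1]]
        simp [derivS, h1, S.h_dot, ih₁, RegularExpression.matches'_mul]
  | star E₁ ih =>
      simp [derivS, S.h_dot, RegularExpression.deriv, ih, RegularExpression.matches'_mul]

lemma lquot_cons {α : Type*} (a : α) (w : List α) (L : Language α) :
    lquot (a :: w) L = lquot w (lquot [a] L) := rfl

theorem support_derivation_quotient {α ε : Type*} (S : Support α ε)
    (a : α) (w : List α) (E : RegularExpression α) :
    (S.h (derivWordS S a w E)).matches' = lquot (a :: w) E.matches' := by
  induction w generalizing a E with
  | nil => rw [derivWordS, derivS_matches', deriv_matches']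
  | cons b u ih =>
      rw [derivWordS, ih, derivS_matches', deriv_matches']
      rfl
end

section
/- Let α be a finite alphabet and let ≈ be the smallest equivalence relation on RegularExpression α that is a congruence with respect to the operations +, · and * and that satisfies (A+B)+C ≈ A+(B+C), A+B ≈ B+A and A+A ≈ A for all expressions A, B, C. Then for every simple regular expression E over α, the set of ≈-equivalence classes of the iterated Brzozowski derivatives of E, namely {[d_w(E)]_≈ | w ∈ α*}, is finite. (Brzozowski's theorem: the set of dissimilar derivatives of a regular expression is finite.) -/
/-- The smallest equivalence relation on regular expressions that is a congruence with respect
to `+`, `·` and `*` and in which `+` is associative, commutative and idempotent. -/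
inductive Sim {α : Type*} : RegularExpression α → RegularExpression α → Prop
  | refl (A : RegularExpression α) : Sim A A
  | symm {A B : RegularExpression α} : Sim A B → Sim B A
  | trans {A B C : RegularExpression α} : Sim A B → Sim B C → Sim A C
  | plusCongr {A A' B B' : RegularExpression α} :
      Sim A A' → Sim B B' → Sim (A + B) (A' + B')
  | compCongr {A A' B B' : RegularExpression α} :
      Sim A A' → Sim B B' → Sim (A * B) (A' * B')
  | starCongr {A A' : RegularExpression α} : Sim A A' → Sim A.star A'.star
  | addAssoc (A B C : RegularExpression α) : Sim (A + B + C) (A + (B + C))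
  | addComm (A B : RegularExpression α) : Sim (A + B) (B + A)
  | addIdem (A : RegularExpression α) : Sim (A + A) A

/-- Iterated Brzozowski derivative of a regular expression by the letters of a word, in order. -/
def derivWordB {α : Type*} [DecidableEq α] (w : List α) (E : RegularExpression α) :
    RegularExpression α :=
  w.foldl (fun F a => F.deriv a) E

namespace BrzAux

open RegularExpression

variable {α : Type*}

/-- Sum of the nonempty list `x :: l`. -/
def sum1 : RegularExpression α → List (RegularExpression α) → RegularExpression α
  | x, [] => x
  | x, y :: l => x + sum1 y l

/-- Sum of a list, `0` if empty. -/
def sumNE : List (RegularExpression α) → RegularExpression α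
  | [] => 0
  | x :: l => sum1 x l

theorem sim_add_add (x y : RegularExpression α) (l m : List (RegularExpression α)) :
    Sim (sum1 x l + sum1 y m) (sum1 x (l ++ y :: m)) := by
  induction l generalizing x with
  | nil => exact Sim.refl _
  | cons z l ih =>
    show Sim (x + sum1 z l + sum1 y m) (x + sum1 z (l ++ y :: m))
    exact Sim.trans (Sim.addAssoc _ _ _) (Sim.plusCongr (Sim.refl _) (ih z))

theorem sim_absorb {y x : RegularExpression α} {l : List (RegularExpression α)}
    (h : y ∈ x :: l) : Sim (y + sum1 x l) (sum1 x l) := by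
  induction l generalizing x with
  | nil =>
    simp only [List.mem_singleton] at h
    subst h; exact Sim.addIdem _
  | cons z l ih =>
    show Sim (y + (x + sum1 z l)) (x + sum1 z l)
    rcases List.mem_cons.1 h with rfl | h'
    · exact Sim.trans (Sim.symm (Sim.addAssoc _ _ _))
        (Sim.plusCongr (Sim.addIdem _) (Sim.refl _))
    · exact Sim.trans (Sim.symm (Sim.addAssoc _ _ _))
        (Sim.trans (Sim.plusCongr (Sim.addComm _ _) (Sim.refl _))
          (Sim.trans (Sim.addAssoc _ _ _) (Sim.plusCongr (Sim.refl _) (ih h'))))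

theorem sim_subset {x y : RegularExpression α} {l m : List (RegularExpression α)}
    (h : ∀ z ∈ x :: l, z ∈ y :: m) : Sim (sum1 y m + sum1 x l) (sum1 y m) := by
  induction l generalizing x with
  | nil =>
    exact Sim.trans (Sim.addComm _ _) (sim_absorb (h x (List.mem_cons_self)))
  | cons z l ih =>
    show Sim (sum1 y m + (x + sum1 z l)) (sum1 y m)
    have hx : Sim (sum1 y m + x) (sum1 y m) :=
      Sim.trans (Sim.addComm _ _) (sim_absorb (h x (List.mem_cons_self)))
    have hrest : ∀ w ∈ z :: l, w ∈ y :: m := fun w hw => h w (List.mem_cons_of_mem _ hw)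
    exact Sim.trans (Sim.symm (Sim.addAssoc _ _ _))
      (Sim.trans (Sim.plusCongr hx (Sim.refl _)) (ih hrest))

theorem sim_of_seteq {x y : RegularExpression α} {l m : List (RegularExpression α)}
    (h : ∀ z, z ∈ x :: l ↔ z ∈ y :: m) : Sim (sum1 x l) (sum1 y m) := by
  have h1 : Sim (sum1 x l + sum1 y m) (sum1 x l) := sim_subset (fun z hz => (h z).2 hz)
  have h2 : Sim (sum1 y m + sum1 x l) (sum1 y m) := sim_subset (fun z hz => (h z).1 hz)
  exact Sim.trans (Sim.symm h1) (Sim.trans (Sim.addComm _ _) h2)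

theorem matchEpsilon_sim {A B : RegularExpression α} (h : Sim A B) :
    A.matchEpsilon = B.matchEpsilon := by
  induction h with
  | refl => rfl
  | symm _ ih => exact ih.symm
  | trans _ _ ih1 ih2 => exact ih1.trans ih2
  | plusCongr _ _ ih1 ih2 => simp [matchEpsilon, ih1, ih2]
  | compCongr _ _ ih1 ih2 => simp [matchEpsilon, ih1, ih2]
  | starCongr _ _ => rfl
  | addAssoc A B C => simp [matchEpsilon, Bool.or_assoc]
  | addComm A B => simp [matchEpsilon, Bool.or_comm]
  | addIdem A => simp [matchEpsilon]

variable [DecidableEq α]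

theorem deriv_comp' (P Q : RegularExpression α) (a : α) :
    deriv (P * Q) a =
      if P.matchEpsilon then deriv P a * Q + deriv Q a else deriv P a * Q := rfl

theorem deriv_sim {A B : RegularExpression α} (h : Sim A B) (a : α) :
    Sim (A.deriv a) (B.deriv a) := by
  induction h with
  | refl => exact Sim.refl _
  | symm _ ih => exact Sim.symm ih
  | trans _ _ ih1 ih2 => exact Sim.trans ih1 ih2
  | plusCongr _ _ ih1 ih2 =>
    rw [RegularExpression.deriv_add, RegularExpression.deriv_add]; exact Sim.plusCongr ih1 ih2
  | @compCongr A A' B B' h1 h2 ih1 ih2 =>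
    rw [deriv_comp', deriv_comp', matchEpsilon_sim h1]
    by_cases he : A'.matchEpsilon
    · simp only [he, if_true]
      exact Sim.plusCongr (Sim.compCongr ih1 h2) ih2
    · simp only [he, if_false]
      exact Sim.compCongr ih1 h2
  | @starCongr A A' h1 ih =>
    rw [RegularExpression.deriv_star, RegularExpression.deriv_star]
    exact Sim.compCongr ih (Sim.starCongr h1)
  | addAssoc A B C =>
    simp only [RegularExpression.deriv_add]; exact Sim.addAssoc _ _ _
  | addComm A B =>
    simp only [RegularExpression.deriv_add]; exact Sim.addComm _ _
  | addIdem A =>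
    simp only [RegularExpression.deriv_add]; exact Sim.addIdem _

theorem deriv_sum1 (a : α) (x : RegularExpression α) (l : List (RegularExpression α)) :
    (sum1 x l).deriv a = sum1 (x.deriv a) (l.map (fun y => y.deriv a)) := by
  induction l generalizing x with
  | nil => rfl
  | cons y l ih =>
    show (x + sum1 y l).deriv a = _
    rw [RegularExpression.deriv_add, ih]
    rfl

/-- `F` is similar to a nonempty sum of elements of `D`. -/
def Spanned (D : List (RegularExpression α)) (F : RegularExpression α) : Prop :=
  ∃ x l, (∀ z ∈ x :: l, z ∈ D) ∧ Sim F (sum1 x l)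

theorem spanned_mono {D D' : List (RegularExpression α)} (h : ∀ z ∈ D, z ∈ D')
    {F : RegularExpression α} (hF : Spanned D F) : Spanned D' F := by
  obtain ⟨x, l, hm, hs⟩ := hF
  exact ⟨x, l, fun z hz => h z (hm z hz), hs⟩

theorem spanned_of_mem {D : List (RegularExpression α)} {x : RegularExpression α}
    (h : x ∈ D) : Spanned D x :=
  ⟨x, [], by simpa using h, Sim.refl x⟩

theorem spanned_sim {D : List (RegularExpression α)} {F G : RegularExpression α}
    (h : Sim F G) (hG : Spanned D G) : Spanned D F := by
  obtain ⟨x, l, hm, hs⟩ := hG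
  exact ⟨x, l, hm, Sim.trans h hs⟩

theorem spanned_add {D : List (RegularExpression α)} {F G : RegularExpression α}
    (hF : Spanned D F) (hG : Spanned D G) : Spanned D (F + G) := by
  obtain ⟨x, l, hm, hs⟩ := hF
  obtain ⟨y, m, hm', hs'⟩ := hG
  refine ⟨x, l ++ y :: m, ?_, Sim.trans (Sim.plusCongr hs hs') (sim_add_add x y l m)⟩
  intro z hz
  rcases List.mem_cons.1 hz with rfl | hz
  · exact hm z (List.mem_cons_self)
  · rcases List.mem_append.1 hz with hz | hz
    · exact hm z (List.mem_cons_of_mem _ hz)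
    · exact hm' z hz

theorem spanned_sum1 {D : List (RegularExpression α)} {x : RegularExpression α}
    {l : List (RegularExpression α)} (h : ∀ z ∈ x :: l, Spanned D z) :
    Spanned D (sum1 x l) := by
  induction l generalizing x with
  | nil => exact h x (List.mem_cons_self)
  | cons y l ih =>
    show Spanned D (x + sum1 y l)
    exact spanned_add (h x (List.mem_cons_self))
      (ih (fun z hz => h z (List.mem_cons_of_mem _ hz)))

theorem canonize {D : List (RegularExpression α)} {F : RegularExpression α}
    (h : Spanned D F) : ∃ u ∈ D.sublists, u ≠ [] ∧ Sim F (sumNE u) := by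
  classical
  obtain ⟨x, l, hm, hs⟩ := h
  let u := D.filter (fun z => decide (z ∈ x :: l))
  have husub : u.Sublist D := List.filter_sublist
  have hxu : x ∈ u := by
    simp only [u, List.mem_filter, decide_eq_true_eq]
    exact ⟨hm x (List.mem_cons_self), List.mem_cons_self⟩
  refine ⟨u, List.mem_sublists.2 husub, fun hne => by simp [hne] at hxu, ?_⟩
  obtain ⟨x', l', hu⟩ : ∃ x' l', u = x' :: l' := by
    cases hu : u with
    | nil => rw [hu] at hxu; simp at hxu
    | cons a b => exact ⟨a, b, rfl⟩
  rw [hu]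
  refine Sim.trans hs (sim_of_seteq ?_)
  intro z
  rw [← hu]
  simp only [u, List.mem_filter, decide_eq_true_eq]
  constructor
  · intro hz; exact ⟨hm z hz, hz⟩
  · intro hz; exact hz.2

/-- Each element's derivative is spanned. -/
def Closed (D : List (RegularExpression α)) : Prop :=
  ∀ x ∈ D, ∀ a, Spanned D (x.deriv a)

theorem spanned_deriv {D : List (RegularExpression α)} (hD : Closed D)
    {F : RegularExpression α} (hF : Spanned D F) (a : α) : Spanned D (F.deriv a) := by
  obtain ⟨x, l, hm, hs⟩ := hF
  refine spanned_sim (deriv_sim hs a) ?_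
  rw [deriv_sum1]
  refine spanned_sum1 ?_
  intro z hz
  rcases List.mem_cons.1 hz with rfl | hz
  · exact hD x (hm x (List.mem_cons_self)) a
  · obtain ⟨y, hy, rfl⟩ := List.mem_map.1 hz
    exact hD y (hm y (List.mem_cons_of_mem _ hy)) a

/-- The finite set of "product" candidates used for `comp` and `star`. -/
def prodSet (DP : List (RegularExpression α)) (B : RegularExpression α) :
    List (RegularExpression α) :=
  (DP.sublists.filter (fun u => !u.isEmpty)).map (fun u => sumNE u * B)

theorem spanned_prod {DP : List (RegularExpression α)} {F : RegularExpression α}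
    (hF : Spanned DP F) (B : RegularExpression α) (D' : List (RegularExpression α)) :
    Spanned (prodSet DP B ++ D') (F * B) := by
  obtain ⟨u, hu, hne, hs⟩ := canonize hF
  have hmem : sumNE u * B ∈ prodSet DP B := by
    refine List.mem_map.2 ⟨u, ?_, rfl⟩
    refine List.mem_filter.2 ⟨hu, ?_⟩
    simp [List.isEmpty_iff, hne]
  exact spanned_sim (Sim.compCongr hs (Sim.refl B))
    (spanned_of_mem (List.mem_append.2 (Or.inl hmem)))

theorem closed_prod {DP : List (RegularExpression α)} (hDP : Closed DP)
    (B : RegularExpression α) (D' : List (RegularExpression α))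
    (hB : ∀ a, Spanned (prodSet DP B ++ D') (B.deriv a))
    (hD' : ∀ x ∈ D', ∀ a, Spanned D' (x.deriv a)) :
    Closed (prodSet DP B ++ D') := by
  intro x hx a
  rcases List.mem_append.1 hx with hx | hx
  · obtain ⟨u, hu, rfl⟩ := List.mem_map.1 hx
    have hune : u ≠ [] := by
      intro h
      have := (List.mem_filter.1 hu).2
      rw [h] at this
      simp at this
    have husub : ∀ z ∈ u, z ∈ DP :=
      fun z hz => (List.mem_sublists.1 (List.mem_filter.1 hu).1).mem hz
    obtain ⟨y, m, rfl⟩ : ∃ y m, u = y :: m := by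
      cases u with
      | nil => exact absurd rfl hune
      | cons a b => exact ⟨a, b, rfl⟩
    have hderivspanned : Spanned DP ((sumNE (y :: m)).deriv a) := by
      show Spanned DP ((sum1 y m).deriv a)
      rw [deriv_sum1]
      refine spanned_sum1 ?_
      intro z hz
      rcases List.mem_cons.1 hz with rfl | hz
      · exact hDP y (husub y (List.mem_cons_self)) a
      · obtain ⟨w, hw, rfl⟩ := List.mem_map.1 hz
        exact hDP w (husub w (List.mem_cons_of_mem _ hw)) a
    rw [deriv_comp']
    by_cases he : (sumNE (y :: m)).matchEpsilon
    · rw [if_pos he]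
      exact spanned_add (spanned_prod hderivspanned B D') (hB a)
    · rw [if_neg he]
      exact spanned_prod hderivspanned B D'
  · exact spanned_mono (fun z hz => List.mem_append.2 (Or.inr hz)) (hD' x hx a)

theorem exists_D (E : RegularExpression α) :
    ∃ D : List (RegularExpression α), (∀ a, Spanned D (E.deriv a)) ∧ Closed D := by
  induction E with
  | zero =>
    refine ⟨[0], fun a => spanned_of_mem (by simp), ?_⟩
    intro x hx a
    simp only [List.mem_singleton] at hx
    subst hx
    exact spanned_of_mem (by simp)
  | epsilon =>
    refine ⟨[0], fun a => spanned_of_mem (by simp), ?_⟩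
    intro x hx a
    simp only [List.mem_singleton] at hx
    subst hx
    exact spanned_of_mem (by simp)
  | char b =>
    refine ⟨[0, 1], fun a => ?_, ?_⟩
    · show Spanned [0, 1] (if b = a then 1 else 0)
      by_cases h : b = a
      · rw [if_pos h]; exact spanned_of_mem (by simp)
      · rw [if_neg h]; exact spanned_of_mem (by simp)
    · intro x hx a
      simp only [List.mem_cons, List.not_mem_nil, or_false] at hx
      rcases hx with rfl | rfl
      · exact spanned_of_mem (by simp)
      · exact spanned_of_mem (by simp)
  | plus P Q ihP ihQ =>
    obtain ⟨DP, hDP1, hDP2⟩ := ihP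
    obtain ⟨DQ, hDQ1, hDQ2⟩ := ihQ
    refine ⟨DP ++ DQ, fun a => ?_, ?_⟩
    · show Spanned (DP ++ DQ) ((P + Q).deriv a)
      rw [RegularExpression.deriv_add]
      exact spanned_add
        (spanned_mono (fun z hz => List.mem_append.2 (Or.inl hz)) (hDP1 a))
        (spanned_mono (fun z hz => List.mem_append.2 (Or.inr hz)) (hDQ1 a))
    · intro x hx a
      rcases List.mem_append.1 hx with hx | hx
      · exact spanned_mono (fun z hz => List.mem_append.2 (Or.inl hz)) (hDP2 x hx a)
      · exact spanned_mono (fun z hz => List.mem_append.2 (Or.inr hz)) (hDQ2 x hx a)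
  | comp P Q ihP ihQ =>
    obtain ⟨DP, hDP1, hDP2⟩ := ihP
    obtain ⟨DQ, hDQ1, hDQ2⟩ := ihQ
    have hQmono : ∀ a, Spanned (prodSet DP Q ++ DQ) (Q.deriv a) :=
      fun a => spanned_mono (fun z hz => List.mem_append.2 (Or.inr hz)) (hDQ1 a)
    refine ⟨prodSet DP Q ++ DQ, fun a => ?_, closed_prod hDP2 Q DQ hQmono hDQ2⟩
    show Spanned (prodSet DP Q ++ DQ) ((P * Q).deriv a)
    rw [deriv_comp']
    by_cases he : P.matchEpsilon
    · rw [if_pos he]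
      exact spanned_add (spanned_prod (hDP1 a) Q DQ) (hQmono a)
    · rw [if_neg he]
      exact spanned_prod (hDP1 a) Q DQ
  | star P ihP =>
    obtain ⟨DP, hDP1, hDP2⟩ := ihP
    have hfirst : ∀ a, Spanned (prodSet DP P.star ++ []) ((P.star).deriv a) := by
      intro a
      rw [RegularExpression.deriv_star]
      exact spanned_prod (hDP1 a) P.star []
    refine ⟨prodSet DP P.star ++ [], hfirst, closed_prod hDP2 P.star [] hfirst ?_⟩
    intro x hx
    simp at hx
  
theorem derivWordB_cons (a : α) (w : List α) (F : RegularExpression α) :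
    derivWordB (a :: w) F = derivWordB w (F.deriv a) := rfl

theorem spanned_derivWord {D : List (RegularExpression α)} (hD : Closed D)
    {F : RegularExpression α} (hF : Spanned D F) (w : List α) :
    Spanned D (derivWordB w F) := by
  induction w generalizing F with
  | nil => exact hF
  | cons a w ih =>
    rw [derivWordB_cons]
    exact ih (spanned_deriv hD hF a)

end BrzAux

theorem brzozowski_dissimilar_derivatives_finite {α : Type*} [Fintype α] [DecidableEq α]
    (E : RegularExpression α) :
    (Set.range fun w : List α => Quot.mk Sim (derivWordB w E)).Finite := by
  obtain ⟨D, hD1, hD2⟩ := BrzAux.exists_D E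
  have hbound : (Set.range fun w : List α => Quot.mk Sim (derivWordB w E)) ⊆
      insert (Quot.mk Sim E)
        ((fun u : List (RegularExpression α) => Quot.mk Sim (BrzAux.sumNE u)) ''
          {u | u ∈ D.sublists}) := by
    rintro q ⟨w, rfl⟩
    cases w with
    | nil => exact Or.inl rfl
    | cons a w =>
      right
      have hsp : BrzAux.Spanned D (derivWordB (a :: w) E) := by
        rw [BrzAux.derivWordB_cons]
        exact BrzAux.spanned_derivWord hD2 (hD1 a) w
      obtain ⟨u, hu, _, hs⟩ := BrzAux.canonize hsp
      exact ⟨u, hu, (Quot.sound hs).symm⟩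
  exact Set.Finite.subset
    (Set.Finite.insert _ (Set.Finite.image _ (D.sublists.finite_toSet))) hbound
end
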